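/- Let A be an n×n complex matrix (n ≥ 2) which is diagonalizable with eigenbasis of unit eigenvectors v₁, …, vₙ, with A·vᵢ = λᵢ·vᵢ, and assume the dominance condition |λ₁| > |λ_j| for all j ≥ 2; set r := (max_{j≥2} |λ_j|)/|λ₁| < 1. Let x⁽⁰⁾ = ∑_{i=1}^{n} aᵢ·vᵢ with a₁ ≠ 0, and define the normalized power-method iterate x⁽ᵏ⁾ := Aᵏ·x⁽⁰⁾ / ‖Aᵏ·x⁽⁰⁾‖ and the Rayleigh quotient λ⁽ᵏ⁾ := ⟨x⁽ᵏ⁾, A·x⁽ᵏ⁾⟩ / ⟨x⁽ᵏ⁾, x⁽ᵏ⁾⟩. Then there exists a constant C ≥ 0 such that |λ₁ − λ⁽ᵏ⁾| ≤ C·rᵏ for all k. -/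

import Mathlib

set_option maxHeartbeats 4000000 in
/-- **Convergence of the Rayleigh quotients in the power method.**
Let `A` be an `n × n` complex matrix (`n ≥ 2`), diagonalizable with an
eigenbasis of unit eigenvectors `v i` (eigenvalues `lam i`), with dominant
eigenvalue `lam z` (`z` the first index): `|lam i| < |lam z|` for `i ≠ z`.
Set `r = (max_{i ≠ z} |lam i|) / |lam z|`. If `x0 = ∑ i, a i • v i` with
`a z ≠ 0`, `x⁽ᵏ⁾ = Aᵏ x0 / ‖Aᵏ x0‖` and
`λ⁽ᵏ⁾ = ⟨x⁽ᵏ⁾, A x⁽ᵏ⁾⟩ / ⟨x⁽ᵏ⁾, x⁽ᵏ⁾⟩` is the Rayleigh quotient, then there is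
a constant `C ≥ 0` with `|lam z - λ⁽ᵏ⁾| ≤ C * rᵏ` for all `k`. -/
theorem stmt_7 {n : ℕ} (hn : 2 ≤ n) (A : Matrix (Fin n) (Fin n) ℂ)
    (v : Fin n → EuclideanSpace ℂ (Fin n))
    (hunit : ∀ i, ‖v i‖ = 1)
    (hli : LinearIndependent ℂ v)
    (hspan : Submodule.span ℂ (Set.range v) = ⊤)
    (lam : Fin n → ℂ)
    (heig : ∀ i, Matrix.toEuclideanLin A (v i) = lam i • v i)
    (z : Fin n) (hz : z = ⟨0, by omega⟩)
    (hdom : ∀ i, i ≠ z → ‖lam i‖ < ‖lam z‖)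
    (r : ℝ)
    (hr : r = ((Finset.univ.erase z).sup'
        (Finset.card_pos.mp (by
          rw [Finset.card_erase_of_mem (Finset.mem_univ z), Finset.card_univ,
            Fintype.card_fin]
          omega))
        fun i => ‖lam i‖) / ‖lam z‖)
    (a : Fin n → ℂ) (ha : a z ≠ 0)
    (x0 : EuclideanSpace ℂ (Fin n)) (hx0 : x0 = ∑ i, a i • v i)
    (xk : ℕ → EuclideanSpace ℂ (Fin n))
    (hxk : ∀ k, xk k = ‖Matrix.toEuclideanLin (A ^ k) x0‖⁻¹ •
      Matrix.toEuclideanLin (A ^ k) x0) :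
    ∃ C : ℝ, 0 ≤ C ∧ ∀ k : ℕ,
      ‖(lam z -
        (inner ℂ (xk k) (Matrix.toEuclideanLin A (xk k)) : ℂ) /
          (inner ℂ (xk k) (xk k) : ℂ))‖ ≤ C * r ^ k := by
  classical
  set L : EuclideanSpace ℂ (Fin n) →ₗ[ℂ] EuclideanSpace ℂ (Fin n) :=
    Matrix.toEuclideanLin A with hL
  set y : ℕ → EuclideanSpace ℂ (Fin n) := fun k => Matrix.toEuclideanLin (A ^ k) x0 with hydef
  have hyk : ∀ k, y k = Matrix.toEuclideanLin (A ^ k) x0 := fun k => rfl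
  clear_value y
  set t : ℝ := ‖lam z‖ with hts
  obtain ⟨w, hwz⟩ : ∃ w : Fin n, w ≠ z := by
    refine ⟨⟨1, by omega⟩, ?_⟩
    simp [hz, Fin.ext_iff]
  have ht : 0 < t := lt_of_le_of_lt (norm_nonneg (lam w)) (hdom w hwz)
  have hlamz : lam z ≠ 0 := by
    intro h; rw [hts, h] at ht; simp at ht
  have hrt : ∀ i, i ≠ z → ‖lam i‖ ≤ r * t := by
    intro i hi
    have : ‖lam i‖ ≤ (Finset.univ.erase z).sup'
        (Finset.card_pos.mp (by
          rw [Finset.card_erase_of_mem (Finset.mem_univ z), Finset.card_univ,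
            Fintype.card_fin]
          omega))
        (fun i => ‖lam i‖) :=
      Finset.le_sup' (fun i => ‖lam i‖) (Finset.mem_erase.2 ⟨hi, Finset.mem_univ i⟩)
    rw [hr, div_mul_cancel₀ _ (ne_of_gt ht)]
    exact this
  have hr0 : 0 ≤ r := by
    have := hrt w hwz
    nlinarith [norm_nonneg (lam w)]
  have hr1 : r < 1 := by
    rw [hr, div_lt_one ht, Finset.sup'_lt_iff]
    intro i hi
    exact hdom i (Finset.mem_erase.1 hi).1
  -- formula for y k
  have hmul : ∀ (B C : Matrix (Fin n) (Fin n) ℂ) (x : EuclideanSpace ℂ (Fin n)),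
      Matrix.toEuclideanLin (B * C) x = Matrix.toEuclideanLin B (Matrix.toEuclideanLin C x) := by
    intro B C x
    simp [Matrix.toEuclideanLin_apply, Matrix.mulVec_mulVec]
  have hy : ∀ k, y k = ∑ i, (a i * lam i ^ k) • v i := by
    intro k
    induction k with
    | zero =>
      have h0 : y 0 = x0 := by
        rw [hyk 0, pow_zero]
        simp [Matrix.toEuclideanLin_apply]
      rw [h0, hx0]
      simp
    | succ k ih =>
      have hstep : y (k + 1) = L (y k) := by
        rw [hyk (k + 1), hyk k, hL, pow_succ']
        exact hmul A (A ^ k) x0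
      rw [hstep, ih, map_sum]
      refine Finset.sum_congr rfl fun i _ => ?_
      rw [map_smul, heig i, smul_smul, pow_succ]
      ring_nf
  have hyne : ∀ k, y k ≠ 0 := by
    intro k hk
    rw [hy k] at hk
    have := Fintype.linearIndependent_iff.1 hli (fun i => a i * lam i ^ k) hk z
    exact mul_ne_zero ha (pow_ne_zero k hlamz) this
  have hynorm : ∀ k, ‖y k‖ ≠ 0 := fun k => norm_ne_zero_iff.2 (hyne k)
  set M : ℝ := ∑ i ∈ Finset.univ.erase z, ‖a i‖ with hM
  set B : ℝ := ∑ i ∈ Finset.univ.erase z, ‖a i‖ * ‖lam z - lam i‖ with hB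
  have hM0 : 0 ≤ M := Finset.sum_nonneg fun i _ => norm_nonneg _
  have hB0 : 0 ≤ B := Finset.sum_nonneg fun i _ =>
    mul_nonneg (norm_nonneg _) (norm_nonneg _)
  have hrest : ∀ k, ‖∑ i ∈ Finset.univ.erase z, (a i * lam i ^ k) • v i‖ ≤ M * (r * t) ^ k := by
    intro k
    calc ‖∑ i ∈ Finset.univ.erase z, (a i * lam i ^ k) • v i‖
        ≤ ∑ i ∈ Finset.univ.erase z, ‖(a i * lam i ^ k) • v i‖ := norm_sum_le _ _
      _ ≤ ∑ i ∈ Finset.univ.erase z, ‖a i‖ * (r * t) ^ k := by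
          refine Finset.sum_le_sum fun i hi => ?_
          rw [norm_smul, hunit i, mul_one]
          have he : ‖a i * lam i ^ k‖ = ‖a i‖ * ‖lam i‖ ^ k := by
            simp [map_mul, map_pow]
          rw [he]
          exact mul_le_mul_of_nonneg_left
            (pow_le_pow_left₀ (norm_nonneg _) (hrt i (Finset.mem_erase.1 hi).1) k)
            (norm_nonneg _)
      _ = M * (r * t) ^ k := by rw [hM, Finset.sum_mul]
  have hylow : ∀ k, ‖a z‖ * t ^ k - M * (r * t) ^ k ≤ ‖y k‖ := by
    intro k
    have hsplit : y k = (a z * lam z ^ k) • v z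
        + ∑ i ∈ Finset.univ.erase z, (a i * lam i ^ k) • v i := by
      rw [hy k, ← Finset.add_sum_erase _ _ (Finset.mem_univ z)]
    have h1 : ‖(a z * lam z ^ k) • v z‖ = ‖a z‖ * t ^ k := by
      rw [norm_smul, hunit z, mul_one]
      simp [map_mul, map_pow, hts]
    have h2 : ‖(a z * lam z ^ k) • v z‖ ≤ ‖y k‖
        + ‖∑ i ∈ Finset.univ.erase z, (a i * lam i ^ k) • v i‖ := by
      calc ‖(a z * lam z ^ k) • v z‖
          = ‖y k - ∑ i ∈ Finset.univ.erase z, (a i * lam i ^ k) • v i‖ := by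
            rw [hsplit, add_sub_cancel_right]
        _ ≤ ‖y k‖ + ‖∑ i ∈ Finset.univ.erase z, (a i * lam i ^ k) • v i‖ := norm_sub_le _ _
    have h3 := hrest k
    rw [h1] at h2
    linarith
  -- the error vector bound
  have herr : ∀ k, ‖lam z • y k - L (y k)‖ ≤ B * (r * t) ^ k := by
    intro k
    have hterm : ∀ i : Fin n, lam z • ((a i * lam i ^ k) • v i) - L ((a i * lam i ^ k) • v i)
        = ((a i * lam i ^ k) * (lam z - lam i)) • v i := by
      intro i
      rw [map_smul, heig i, smul_smul, smul_smul, ← sub_smul]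
      ring_nf
    have hform : lam z • y k - L (y k)
        = ∑ i ∈ Finset.univ.erase z, ((a i * lam i ^ k) * (lam z - lam i)) • v i := by
      rw [hy k, Finset.smul_sum, map_sum, ← Finset.sum_sub_distrib,
        Finset.sum_congr rfl fun i _ => hterm i,
        ← Finset.sum_erase_add _ _ (Finset.mem_univ z)]
      simp
    rw [hform]
    calc ‖∑ i ∈ Finset.univ.erase z, ((a i * lam i ^ k) * (lam z - lam i)) • v i‖
        ≤ ∑ i ∈ Finset.univ.erase z, ‖((a i * lam i ^ k) * (lam z - lam i)) • v i‖ :=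
          norm_sum_le _ _
      _ ≤ ∑ i ∈ Finset.univ.erase z,
            (‖a i‖ * ‖lam z - lam i‖) * (r * t) ^ k := by
          refine Finset.sum_le_sum fun i hi => ?_
          rw [norm_smul, hunit i, mul_one]
          have he : ‖(a i * lam i ^ k) * (lam z - lam i)‖
              = ‖a i‖ * ‖lam z - lam i‖ * ‖lam i‖ ^ k := by
            simp [map_mul, map_pow]; ring
          rw [he]
          exact mul_le_mul_of_nonneg_left
            (pow_le_pow_left₀ (norm_nonneg _) (hrt i (Finset.mem_erase.1 hi).1) k)
            (mul_nonneg (norm_nonneg _) (norm_nonneg _))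
      _ = B * (r * t) ^ k := by rw [hB, Finset.sum_mul]
  -- Rayleigh quotient of xk equals that of y k
  have hray : ∀ k, (inner ℂ (xk k) (L (xk k)) : ℂ) / (inner ℂ (xk k) (xk k) : ℂ)
      = (inner ℂ (y k) (L (y k)) : ℂ) / (inner ℂ (y k) (y k) : ℂ) := by
    intro k
    have hx : xk k = (‖y k‖⁻¹ : ℝ) • y k := by rw [hyk k]; exact hxk k
    set s : ℝ := ‖y k‖⁻¹ with hs
    have hs0 : (s : ℂ) ≠ 0 := by
      simp only [hs, Ne, Complex.ofReal_eq_zero, inv_eq_zero]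
      exact hynorm k
    have hsm : xk k = (s : ℂ) • y k := by
      rw [hx]; exact RCLike.real_smul_eq_coe_smul (K := ℂ) s (y k)
    rw [hsm, map_smul]
    simp only [inner_smul_left, inner_smul_right, Complex.conj_ofReal]
    rw [← mul_assoc, ← mul_assoc, mul_div_mul_left _ _ (mul_ne_zero hs0 hs0)]
  -- error bound for the Rayleigh quotient of y k
  have hQ : ∀ k, ‖(lam z - (inner ℂ (y k) (L (y k)) : ℂ) / (inner ℂ (y k) (y k) : ℂ))‖
      ≤ B * (r * t) ^ k / ‖y k‖ := by
    intro k
    have hinner : (inner ℂ (y k) (y k) : ℂ) = (‖y k‖ : ℂ) ^ 2 :=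
      inner_self_eq_norm_sq_to_K (y k)
    have hinne : (inner ℂ (y k) (y k) : ℂ) ≠ 0 := by
      rw [hinner]
      exact pow_ne_zero 2 (by simpa using hynorm k)
    have hrepr : lam z - (inner ℂ (y k) (L (y k)) : ℂ) / (inner ℂ (y k) (y k) : ℂ)
        = (inner ℂ (y k) (lam z • y k - L (y k)) : ℂ) / (inner ℂ (y k) (y k) : ℂ) := by
      rw [eq_div_iff hinne, sub_mul, div_mul_cancel₀ _ hinne, inner_sub_right,
        inner_smul_right]
    rw [hrepr, norm_div]
    have hnum : ‖(inner ℂ (y k) (lam z • y k - L (y k)) : ℂ)‖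
        ≤ ‖y k‖ * (B * (r * t) ^ k) := by
      calc ‖(inner ℂ (y k) (lam z • y k - L (y k)) : ℂ)‖
          ≤ ‖y k‖ * ‖lam z • y k - L (y k)‖ := by
            exact norm_inner_le_norm _ _
        _ ≤ ‖y k‖ * (B * (r * t) ^ k) :=
            mul_le_mul_of_nonneg_left (herr k) (norm_nonneg _)
    have hden : ‖(inner ℂ (y k) (y k) : ℂ)‖ = ‖y k‖ ^ 2 := by
      rw [hinner, ← Complex.ofReal_pow, Complex.norm_real, Real.norm_eq_abs]
      exact _root_.abs_of_nonneg (sq_nonneg _)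
    rw [hden]
    have hpos : (0 : ℝ) < ‖y k‖ := lt_of_le_of_ne (norm_nonneg _) (Ne.symm (hynorm k))
    rw [div_le_div_iff₀ (pow_pos hpos 2) hpos]
    calc ‖(inner ℂ (y k) (lam z • y k - L (y k)) : ℂ)‖ * ‖y k‖
        ≤ (‖y k‖ * (B * (r * t) ^ k)) * ‖y k‖ :=
          mul_le_mul_of_nonneg_right hnum (norm_nonneg _)
      _ = B * (r * t) ^ k * ‖y k‖ ^ 2 := by ring
  -- choose N
  have haz : 0 < ‖a z‖ := by
    simpa [AbsoluteValue.pos_iff] using ha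
  have htend : Filter.Tendsto (fun k => M * r ^ k) Filter.atTop (nhds 0) := by
    simpa using (tendsto_pow_atTop_nhds_zero_of_lt_one hr0 hr1).const_mul M
  obtain ⟨N, hN⟩ := (htend.eventually (gt_mem_nhds (half_pos haz))).exists
  have hMk : ∀ k, N ≤ k → M * r ^ k ≤ ‖a z‖ / 2 := by
    intro k hk
    have : r ^ k ≤ r ^ N := pow_le_pow_of_le_one hr0 hr1.le hk
    nlinarith
  have hylow2 : ∀ k, N ≤ k → ‖a z‖ / 2 * t ^ k ≤ ‖y k‖ := by
    intro k hk
    have h1 := hylow k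
    have h2 := hMk k hk
    have h3 : (r * t) ^ k = r ^ k * t ^ k := mul_pow r t k
    have htk : 0 < t ^ k := pow_pos ht k
    nlinarith
  -- assemble the constant
  set C : ℝ := 2 * B / ‖a z‖
      + ∑ k ∈ Finset.range N, B * t ^ k / ‖y k‖ with hC
  have hcnn : ∀ k, 0 ≤ B * t ^ k / ‖y k‖ := fun k =>
    div_nonneg (mul_nonneg hB0 (pow_nonneg ht.le k)) (norm_nonneg _)
  have hC0 : 0 ≤ C := by
    rw [hC]
    have h1 : 0 ≤ ∑ k ∈ Finset.range N, B * t ^ k / ‖y k‖ :=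
      Finset.sum_nonneg fun k _ => hcnn k
    have h2 : 0 ≤ 2 * B / ‖a z‖ :=
      div_nonneg (by linarith) (norm_nonneg _)
    linarith
  refine ⟨C, hC0, fun k => ?_⟩
  rw [hray k]
  have hbase := hQ k
  have hsplitpow : B * (r * t) ^ k / ‖y k‖ = (B * t ^ k / ‖y k‖) * r ^ k := by
    rw [mul_pow]
    field_simp
  rcases le_or_gt N k with hk | hk
  · -- large k
    have hylk := hylow2 k hk
    have hpos : (0 : ℝ) < ‖a z‖ / 2 * t ^ k := mul_pos (half_pos haz) (pow_pos ht k)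
    have h1 : B * (r * t) ^ k / ‖y k‖ ≤ B * (r * t) ^ k / (‖a z‖ / 2 * t ^ k) :=
      div_le_div_of_nonneg_left (mul_nonneg hB0 (pow_nonneg (mul_nonneg hr0 ht.le) k)) hpos hylk
    have h2 : B * (r * t) ^ k / (‖a z‖ / 2 * t ^ k)
        = (2 * B / ‖a z‖) * r ^ k := by
      rw [mul_pow]
      field_simp
    have h3 : (2 * B / ‖a z‖) * r ^ k ≤ C * r ^ k := by
      have hsum : 0 ≤ ∑ k ∈ Finset.range N, B * t ^ k / ‖y k‖ :=
        Finset.sum_nonneg fun k _ => hcnn k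
      have : 2 * B / ‖a z‖ ≤ C := by rw [hC]; linarith
      exact mul_le_mul_of_nonneg_right this (pow_nonneg hr0 k)
    calc ‖(lam z - (inner ℂ (y k) (L (y k)) : ℂ) / (inner ℂ (y k) (y k) : ℂ))‖
        ≤ B * (r * t) ^ k / ‖y k‖ := hbase
      _ ≤ B * (r * t) ^ k / (‖a z‖ / 2 * t ^ k) := h1
      _ = (2 * B / ‖a z‖) * r ^ k := h2
      _ ≤ C * r ^ k := h3
  · -- small k
    have hle : B * t ^ k / ‖y k‖ ≤ C := by
      rw [hC]
      have h1 : B * t ^ k / ‖y k‖ ≤ ∑ j ∈ Finset.range N, B * t ^ j / ‖y j‖ :=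
        Finset.single_le_sum (fun j _ => hcnn j) (Finset.mem_range.2 hk)
      have h2 : 0 ≤ 2 * B / ‖a z‖ :=
        div_nonneg (by linarith) (norm_nonneg _)
      linarith
    calc ‖(lam z - (inner ℂ (y k) (L (y k)) : ℂ) / (inner ℂ (y k) (y k) : ℂ))‖
        ≤ B * (r * t) ^ k / ‖y k‖ := hbase
      _ = (B * t ^ k / ‖y k‖) * r ^ k := hsplitpow
      _ ≤ C * r ^ k := mul_le_mul_of_nonneg_right hle (pow_nonneg hr0 k)
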